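/- Let G be a commutative group, let n, s ≥ 1, and let {h_{i,j}} (1 ≤ i ≤ n, 1 ≤ j ≤ s) be elements of G such that for every (i_1, …, i_s) ∈ {1, …, n}^s the set {h_{i_1,1}, …, h_{i_s,s}} generates G as a group. Suppose f : G → ℂ satisfies Δ_{h_{n,k}} ⋯ Δ_{h_{2,k}} Δ_{h_{1,k}} f = 0 for every k = 1, …, s. Then f is a polynomial, i.e. there exists a nonnegative integer N such that Δ_{g_{N+1}} Δ_{g_N} ⋯ Δ_{g_1} f = 0 for all g_1, …, g_{N+1} ∈ G. -/

import Mathlib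

noncomputable section

/-- Forward difference operator: `Δ_h f x = f (x + h) - f x`. -/
def fwdDiffOp {G M : Type*} [AddCommGroup G] [AddCommGroup M] (h : G) (f : G → M) : G → M :=
  fun x => f (x + h) - f x

/-- Mixed differences along a list of steps; the head of the list is applied outermost,
so `mixedDiff [g_m, …, g_1] f = Δ_{g_m} ⋯ Δ_{g_1} f`. -/
def mixedDiff {G M : Type*} [AddCommGroup G] [AddCommGroup M] : List G → (G → M) → (G → M)
  | [], f => f
  | h :: t, f => fwdDiffOp h (mixedDiff t f)

/-- Translation operator: `τ_h f x = f (x + h)`. -/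
def transOp {G M : Type*} [AddCommGroup G] (h : G) (f : G → M) : G → M :=
  fun x => f (x + h)

/-- The span of all translates of `g`. -/
def tauSpan {G : Type*} [AddCommGroup G] (g : G → ℂ) : Submodule ℂ (G → ℂ) :=
  Submodule.span ℂ (Set.range fun h : G => transOp h g)

/-- `f` is an exponential polynomial iff the span of its translates is finite dimensional. -/
def IsExpPoly {G : Type*} [AddCommGroup G] (f : G → ℂ) : Prop :=
  FiniteDimensional ℂ (tauSpan f)

namespace MontelAux

variable {G : Type*} [AddCommGroup G]

abbrev R (G : Type*) [AddCommGroup G] := AddMonoidAlgebra ℂ G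

/-- Translation as a linear endomorphism. -/
def transL (g : G) : (G → ℂ) →ₗ[ℂ] (G → ℂ) where
  toFun := transOp g
  map_add' := by intros; rfl
  map_smul' := by intros; rfl

def transHom : Multiplicative G →* Module.End ℂ (G → ℂ) where
  toFun g := transL (Multiplicative.toAdd g)
  map_one' := by
    ext f x
    simp [transL, transOp]
  map_mul' := by
    intro a b
    ext f x
    simp [transL, transOp, Module.End.mul_apply, add_assoc]
    change f _ = f (x + _ + _)
    rw [add_assoc]

def phi : R G →ₐ[ℂ] Module.End ℂ (G → ℂ) :=
  AddMonoidAlgebra.lift ℂ _ G transHom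

def U (g : G) : R G := AddMonoidAlgebra.single g 1 - 1

lemma phi_single (g : G) : (phi (AddMonoidAlgebra.single g (1:ℂ)) : Module.End ℂ (G → ℂ)) = transL g := by
  simp [phi, AddMonoidAlgebra.lift_single, transHom]

lemma phi_U_apply (g : G) (f : G → ℂ) : phi (U g) f = fwdDiffOp g f := by
  have : phi (U g) = transL g - 1 := by
    simp [U, map_sub, phi_single, map_one]
  rw [this]
  ext x
  simp [transL, transOp, fwdDiffOp]
  rfl

lemma mixedDiff_eq_phi (l : List G) (f : G → ℂ) :
    mixedDiff l f = phi ((l.map U).prod) f := by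
  induction l with
  | nil => simp [mixedDiff]
  | cons a t ih =>
    simp only [mixedDiff, List.map_cons, List.prod_cons, map_mul, Module.End.mul_apply]
    rw [ih, phi_U_apply]

lemma U_mem_span {S : Set G} {g : G} (hg : g ∈ AddSubgroup.closure S) :
    U g ∈ Ideal.span (U '' S) := by
  induction hg using AddSubgroup.closure_induction with
  | mem x hx => exact Ideal.subset_span ⟨x, hx, rfl⟩
  | zero =>
    have : U (0 : G) = 0 := by simp [U, ← AddMonoidAlgebra.one_def]
    rw [this]; exact zero_mem _
  | add x y hx hy px py =>
    have hxy : U (x + y) = U x + AddMonoidAlgebra.single x 1 * U y := by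
      simp only [U, mul_sub, mul_one, AddMonoidAlgebra.single_mul_single, one_mul]
      ring
    rw [hxy]
    exact add_mem px (Ideal.mul_mem_left _ _ py)
  | neg x hx px =>
    have hneg : U (-x) = -(AddMonoidAlgebra.single (-x) 1 * U x) := by
      simp [U, mul_sub, AddMonoidAlgebra.single_mul_single, ← AddMonoidAlgebra.one_def]
    rw [hneg]
    exact neg_mem (Ideal.mul_mem_left _ _ px)

end MontelAux

section Key
variable {A : Type*} [CommRing A]

open Finset

lemma key_lemma {n s : ℕ} (u : Fin n → Fin s → A) (I : Ideal A)
    (hP : ∀ k, ∏ i, u i k ∈ I) :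
    ∀ (r : ℕ) (v : Fin r → A)
      (_ : ∀ m (idx : Fin s → Fin n), v m ∈ Ideal.span (Set.range fun j => u (idx j) j))
      (σ : Fin s → Finset (Fin n)) (w : A)
      (_ : s * (n - 1) + 1 ≤ (∑ j, (σ j).card) + r ∨ ∃ j, σ j = Finset.univ),
      w * (∏ j, ∏ i ∈ σ j, u i j) * ∏ m, v m ∈ I := by
  intro r
  induction r with
  | zero =>
    intro v hv σ w hr
    -- no factors left; a column must be full
    have hfull : ∃ j, σ j = Finset.univ := by
      rcases hr with hr | hr
      · -- ∑ card + 0 ≥ s(n-1)+1 forces some column full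
        by_contra hc
        push_neg at hc
        have hb : ∀ j, (σ j).card ≤ n - 1 := by
          intro j
          have : (σ j).card < n := by
            have := Finset.card_lt_card (Finset.ssubset_univ_iff.mpr (hc j))
            simpa using this
          omega
        have : (∑ j, (σ j).card) ≤ s * (n - 1) := by
          calc (∑ j, (σ j).card) ≤ ∑ _j : Fin s, (n-1) := Finset.sum_le_sum fun j _ => hb j
          _ = s * (n-1) := by simp [Finset.sum_const, mul_comm]
        omega
      · exact hr
    obtain ⟨j, hj⟩ := hfull
    have hdvd : (∏ i, u i j) ∣ w * (∏ j', ∏ i ∈ σ j', u i j') * ∏ m, v m := by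
      have h1 : (∏ i ∈ σ j, u i j) ∣ ∏ j', ∏ i ∈ σ j', u i j' :=
        Finset.dvd_prod_of_mem _ (Finset.mem_univ j)
      rw [hj] at h1
      exact (h1.mul_left w).mul_right _
    exact Ideal.mem_of_dvd I hdvd (hP j)
  | succ r ih =>
    intro v hv σ w hr
    by_cases hfull : ∃ j, σ j = Finset.univ
    · obtain ⟨j, hj⟩ := hfull
      have hdvd : (∏ i, u i j) ∣ w * (∏ j', ∏ i ∈ σ j', u i j') * ∏ m, v m := by
        have h1 : (∏ i ∈ σ j, u i j) ∣ ∏ j', ∏ i ∈ σ j', u i j' :=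
          Finset.dvd_prod_of_mem _ (Finset.mem_univ j)
        rw [hj] at h1
        exact (h1.mul_left w).mul_right _
      exact Ideal.mem_of_dvd I hdvd (hP j)
    · push_neg at hfull
      -- choose a fresh row in each column
      have hchoice : ∀ j, ∃ i, i ∉ σ j := by
        intro j
        by_contra hc
        push_neg at hc
        exact hfull j (Finset.eq_univ_iff_forall.mpr hc)
      choose idx hidx using hchoice
      obtain ⟨c, hc⟩ := Submodule.mem_span_range_iff_exists_fun A |>.mp (hv 0 idx)
      -- expand the product over Fin (r+1)
      have hsplit : (∏ m, v m) = v 0 * ∏ m : Fin r, v m.succ := Fin.prod_univ_succ v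
      have hexp : w * (∏ j, ∏ i ∈ σ j, u i j) * ∏ m, v m
          = ∑ j, (w * c j) *
              (∏ j', ∏ i ∈ Function.update σ j (insert (idx j) (σ j)) j', u i j') *
              ∏ m : Fin r, v m.succ := by
        have hup : ∀ j, (∏ j', ∏ i ∈ Function.update σ j (insert (idx j) (σ j)) j', u i j')
            = u (idx j) j * ∏ j', ∏ i ∈ σ j', u i j' := by
          intro j
          have hfun : (fun j' => ∏ i ∈ Function.update σ j (insert (idx j) (σ j)) j', u i j')
              = Function.update (fun j' => ∏ i ∈ σ j', u i j') j
                  (∏ i ∈ insert (idx j) (σ j), u i j) := by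
            funext j'
            rcases eq_or_ne j' j with rfl | hne
            · simp
            · simp [Function.update_of_ne hne]
          rw [hfun, Finset.prod_update_of_mem (Finset.mem_univ j),
            Finset.prod_insert (hidx j)]
          rw [Finset.sdiff_singleton_eq_erase, mul_assoc,
            Finset.mul_prod_erase Finset.univ (fun j' => ∏ i ∈ σ j', u i j')
              (Finset.mem_univ j)]
        rw [hsplit, ← hc]
        rw [Finset.sum_mul, Finset.mul_sum]
        · apply Finset.sum_congr rfl
          intro j _
          rw [hup j]
          simp only [smul_eq_mul]
          ring
      rw [hexp]
      apply Ideal.sum_mem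
      intro j _
      apply ih (fun m => v m.succ) (fun m idx' => hv m.succ idx')
      rcases hr with hr | hr
      · left
        have hcard : ∑ j', (Function.update σ j (insert (idx j) (σ j)) j').card
            = (∑ j', (σ j').card) + 1 := by
          have : (fun j' => (Function.update σ j (insert (idx j) (σ j)) j').card)
              = Function.update (fun j' => (σ j').card) j ((σ j).card + 1) := by
            funext j'
            rcases eq_or_ne j' j with rfl | hne
            · simp [Finset.card_insert_of_notMem (hidx _)]
            · simp [Function.update_of_ne hne]
          rw [this, Finset.sum_update_of_mem (Finset.mem_univ j),
            Finset.sdiff_singleton_eq_erase,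
            ← Finset.add_sum_erase Finset.univ _ (Finset.mem_univ j)]
          ring
        rw [hcard]; omega
      · obtain ⟨j', hj'⟩ := hr
        exact absurd hj' (hfull j')

end Key

open MontelAux in
theorem montel_mixed_polynomial' {G : Type*} [AddCommGroup G] {n s : ℕ} (hn : 1 ≤ n) (hs : 1 ≤ s)
    (h : Fin n → Fin s → G)
    (hgen : ∀ idx : Fin s → Fin n,
      AddSubgroup.closure (Set.range fun j : Fin s => h (idx j) j) = ⊤)
    (f : G → ℂ)
    (hf : ∀ k : Fin s, mixedDiff (List.ofFn fun i : Fin n => h i k).reverse f = 0) :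
    ∃ N : ℕ, ∀ g : Fin (N + 1) → G, mixedDiff (List.ofFn g).reverse f = 0 := by
  classical
  set I : Ideal (R G) := Ideal.span (Set.range fun k : Fin s => ∏ i, U (h i k)) with hI
  -- every element of I annihilates f
  have hann : ∀ p ∈ I, phi p f = 0 := by
    intro p hp
    induction hp using Submodule.span_induction with
    | mem x hx =>
      obtain ⟨k, rfl⟩ := hx
      have := hf k
      rw [mixedDiff_eq_phi] at this
      rwa [List.map_reverse, List.prod_reverse, List.map_ofFn, List.prod_ofFn] at this
    | zero => simp
    | add x y _ _ px py => rw [map_add]; simp [LinearMap.add_apply, px, py]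
    | smul r x _ px =>
      rw [smul_eq_mul, map_mul, Module.End.mul_apply, px, map_zero]
  refine ⟨s * (n - 1), fun g => ?_⟩
  rw [mixedDiff_eq_phi, List.map_reverse, List.prod_reverse, List.map_ofFn, List.prod_ofFn]
  apply hann
  have := key_lemma (fun i k => U (h i k)) I
    (fun k => Ideal.subset_span ⟨k, rfl⟩)
    (s * (n - 1) + 1) (fun m => U (g m))
    (fun m idx => by
      have hmem : g m ∈ AddSubgroup.closure (Set.range fun j : Fin s => h (idx j) j) := by
        rw [hgen idx]; trivial
      have := U_mem_span hmem
      rwa [← Set.range_comp] at this)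
    (fun _ => ∅) 1 (by left; simp)
  simpa using this

/-- **Montel-type theorem for mixed differences, polynomial case.**
If for every choice `(i_1, …, i_s) ∈ {1, …, n}^s` the set `{h i_1 1, …, h i_s s}` generates the
commutative group `G`, and `Δ_{h n k} ⋯ Δ_{h 1 k} f = 0` for each `k`, then `f` is a
polynomial: there is `N` with `Δ_{g_{N+1}} ⋯ Δ_{g_1} f = 0` for all `g_1, …, g_{N+1}`. -/
theorem montel_mixed_polynomial {G : Type*} [AddCommGroup G] {n s : ℕ} (hn : 1 ≤ n) (hs : 1 ≤ s)
    (h : Fin n → Fin s → G)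
    (hgen : ∀ idx : Fin s → Fin n,
      AddSubgroup.closure (Set.range fun j : Fin s => h (idx j) j) = ⊤)
    (f : G → ℂ)
    (hf : ∀ k : Fin s, mixedDiff (List.ofFn fun i : Fin n => h i k).reverse f = 0) :
    ∃ N : ℕ, ∀ g : Fin (N + 1) → G, mixedDiff (List.ofFn g).reverse f = 0 := by
  exact montel_mixed_polynomial' hn hs h hgen f hf

end
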